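/- arXiv:1210.0779 — 3 statements merged into one kernel-verified Lean document; each statement's English description precedes it below -/
import Mathlib

section
/- Let θ ∈ ℝ. There exists a constant C > 0 (depending on θ, α, δ, L, H but not on ν) such that for every ν ∈ (0,1] and every solution (U, V, W) of the regularized Fourier X-mode system: |U(x)| ≤ C (|V(H)| + |W(H)|) / √(r²x² + ν²) for all 0 < x ≤ H. -/
open Complex

/-- Backward Grönwall inequality with coefficient `K/t` on `[x, η] ⊆ (0, ∞)`,
proved via the substitution `t = η e^{-s}`. -/
lemma gronwall_log {E : Type*} [NormedAddCommGroup E] [NormedSpace ℝ E]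
    {f f' : ℝ → E} {K η x : ℝ} (hx : 0 < x) (hxη : x ≤ η)
    (hd : ∀ t ∈ Set.Icc x η, HasDerivAt f (f' t) t)
    (hbd : ∀ t ∈ Set.Icc x η, t * ‖f' t‖ ≤ K * ‖f t‖) :
    ‖f x‖ ≤ ‖f η‖ * Real.exp (K * Real.log (η / x)) := by
  have hη : 0 < η := hx.trans_le hxη
  set S := Real.log (η / x) with hS
  have hS0 : 0 ≤ S := Real.log_nonneg (by rw [le_div_iff₀ hx]; linarith)
  have hexpS : Real.exp (-S) = x / η := by
    rw [hS, Real.exp_neg, Real.exp_log (by positivity)]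
    field_simp
  set g : ℝ → E := fun s => f (η * Real.exp (-s)) with hg
  set g' : ℝ → E := fun s => (η * (Real.exp (-s) * (-1))) • f' (η * Real.exp (-s)) with hg'
  have hmem : ∀ s ∈ Set.Icc 0 S, η * Real.exp (-s) ∈ Set.Icc x η := by
    intro s hs
    constructor
    · have h1 : Real.exp (-S) ≤ Real.exp (-s) := Real.exp_le_exp.2 (by linarith [hs.2])
      rw [hexpS] at h1
      calc x = η * (x / η) := by field_simp
        _ ≤ η * Real.exp (-s) := mul_le_mul_of_nonneg_left h1 hη.le
    · have h1 : Real.exp (-s) ≤ 1 := by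
        rw [show (1:ℝ) = Real.exp 0 by simp]
        exact Real.exp_le_exp.2 (by linarith [hs.1])
      calc η * Real.exp (-s) ≤ η * 1 := mul_le_mul_of_nonneg_left h1 hη.le
        _ = η := mul_one η
  have hder : ∀ s ∈ Set.Icc 0 S, HasDerivAt g (g' s) s := by
    intro s hs
    have h1 : HasDerivAt (fun y : ℝ => η * Real.exp (-y)) (η * (Real.exp (-s) * (-1))) s :=
      (((Real.hasDerivAt_exp (-s)).comp s (hasDerivAt_neg s))).const_mul η
    exact (hd _ (hmem s hs)).scomp s h1
  have hcont : ContinuousOn g (Set.Icc 0 S) :=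
    fun s hs => (hder s hs).continuousAt.continuousWithinAt
  have hbound : ∀ s ∈ Set.Ico 0 S, ‖g' s‖ ≤ K * ‖g s‖ + 0 := by
    intro s hs
    have hmem' := hmem s (Set.Ico_subset_Icc_self hs)
    have : ‖g' s‖ = (η * Real.exp (-s)) * ‖f' (η * Real.exp (-s))‖ := by
      rw [hg']
      simp only [norm_smul, Real.norm_eq_abs]
      congr 1
      rw [abs_of_nonpos (by nlinarith [Real.exp_pos (-s)] : η * (Real.exp (-s) * (-1)) ≤ 0)]
      ring
    rw [this, add_zero]
    exact hbd _ hmem'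
  have key := norm_le_gronwallBound_of_norm_deriv_right_le hcont
    (fun s hs => (hder s (Set.Ico_subset_Icc_self hs)).hasDerivWithinAt) le_rfl hbound
    S ⟨hS0, le_rfl⟩
  rw [sub_zero, gronwallBound_ε0] at key
  have hgS : g S = f x := by
    rw [hg]
    simp only []
    congr 1
    rw [hexpS]
    field_simp
  have hg0 : g 0 = f η := by rw [hg]; simp
  rw [hgS, hg0] at key
  exact key

set_option maxHeartbeats 4000000 in
/-- Pointwise bound on `U` (Proposition 5.17 of the paper): there is a constant
`C`, independent of `ν ∈ (0,1]` and of the solution, with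
`|U(x)| ≤ C (|V(H)| + |W(H)|) / √(r²x² + ν²)` for `0 < x ≤ H`. -/
theorem pointwise_bound_on_U
    (L H r θ : ℝ) (hL : 0 < L) (hH : 0 < H) (hr : 0 < r)
    (α δ : ℝ → ℝ)
    (hα : ContDiffOn ℝ 2 α (Set.Ici (-L)))
    (hαbd : ∃ C, ∀ x, -L ≤ x → |α x| ≤ C)
    (hα0 : α 0 = 0) (hα'0 : deriv α 0 < 0)
    (hαr : ∀ x ∈ Set.Icc (-L) H, r * |x| ≤ |α x|)
    (hδ : ContDiffOn ℝ 1 δ (Set.Ici (-L)))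
    (hδbd : ∃ C, ∀ x, -L ≤ x → |δ x| ≤ C) :
    ∃ C > 0, ∀ ν ∈ Set.Ioc (0:ℝ) 1, ∀ U V W : ℝ → ℂ,
      (∀ x, -L ≤ x → HasDerivAt V (W x + Complex.I * (θ : ℂ) * U x) x) →
      (∀ x, -L ≤ x →
        Complex.I * (θ : ℂ) * W x - ((α x : ℂ) + Complex.I * (ν : ℂ)) * U x
          - Complex.I * (δ x : ℂ) * V x = 0) →
      (∀ x, -L ≤ x → HasDerivAt W
        (Complex.I * (δ x : ℂ) * U x
          - ((α x : ℂ) + Complex.I * (ν : ℂ)) * V x) x) →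
      ∀ x : ℝ, 0 < x → x ≤ H →
        ‖U x‖ ≤ C * (‖V H‖ + ‖W H‖) / Real.sqrt (r^2 * x^2 + ν^2) := by
  classical
  obtain ⟨Ca, hCa⟩ := hαbd
  obtain ⟨Cd, hCd⟩ := hδbd
  have hL0 : -L < 0 := by linarith
  have hCa0 : 0 ≤ Ca := le_trans (abs_nonneg _) (hCa 0 hL0.le)
  have hCd0 : 0 ≤ Cd := le_trans (abs_nonneg _) (hCd 0 hL0.le)
  have hδdiff : ∀ t : ℝ, -L < t → HasDerivAt δ (deriv δ t) t := by
    intro t ht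
    have h1 : DifferentiableOn ℝ δ (Set.Ioi (-L)) :=
      (hδ.mono Set.Ioi_subset_Ici_self).differentiableOn one_ne_zero
    exact (h1.differentiableAt (isOpen_Ioi.mem_nhds ht)).hasDerivAt
  obtain ⟨Cd', hCd'⟩ : ∃ C, ∀ t ∈ Set.Icc (0:ℝ) H, |deriv δ t| ≤ C := by
    have h1 : ContinuousOn (deriv δ) (Set.Ioi (-L)) :=
      (hδ.mono Set.Ioi_subset_Ici_self).continuousOn_deriv_of_isOpen isOpen_Ioi le_rfl
    obtain ⟨C, hC⟩ := (isCompact_Icc (a := (0:ℝ)) (b := H)).exists_bound_of_continuousOn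
      (h1.mono (fun t ht => lt_of_lt_of_le hL0 ht.1))
    exact ⟨C, fun t ht => by simpa [Real.norm_eq_abs] using hC t ht⟩
  have hCd'0 : 0 ≤ Cd' := le_trans (abs_nonneg _) (hCd' 0 ⟨le_rfl, hH.le⟩)
  set c₁ : ℝ := |θ| * (Ca + 1) + Cd' with hc₁
  set c₃ : ℝ := c₁ + Cd with hc₃
  have hc₁0 : 0 ≤ c₁ := add_nonneg (mul_nonneg (abs_nonneg θ) (by linarith)) hCd'0
  have hc₃0 : 0 ≤ c₃ := add_nonneg hc₁0 hCd0
  set lam : ℝ := 4 * (|θ| + Cd) / r + 1 with hlam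
  have hlamaux : 0 ≤ 4 * (|θ| + Cd) / r := by
    apply div_nonneg _ hr.le
    have := abs_nonneg θ
    linarith
  have hlam1 : 1 ≤ lam := by rw [hlam]; linarith
  have hlam0 : 0 < lam := by linarith
  have hrlam : r * lam = 4 * (|θ| + Cd) + r := by
    rw [hlam]
    field_simp
  set η : ℝ := min H (min (1 / (4 * (Ca + 2))) (1 / (4 * lam * (c₃ + 1)))) with hηdef
  have hη0 : 0 < η := by
    apply lt_min hH
    apply lt_min
    · positivity
    · positivity
  have hηH : η ≤ H := min_le_left _ _
  have hηCa : η * (Ca + 2) * 4 ≤ 1 := by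
    have h1 : η ≤ 1 / (4 * (Ca + 2)) := le_trans (min_le_right _ _) (min_le_left _ _)
    rw [le_div_iff₀ (by positivity)] at h1
    linarith
  have hηlam : 4 * lam * (c₃ + 1) * η ≤ 1 := by
    have h1 : η ≤ 1 / (4 * lam * (c₃ + 1)) := le_trans (min_le_right _ _) (min_le_right _ _)
    rw [le_div_iff₀ (by positivity)] at h1
    linarith
  have hηCa0 : 0 ≤ η * Ca := mul_nonneg hη0.le hCa0
  have hη1 : η ≤ 1 := by linarith only [hηCa, hηCa0, hη0.le]
  have hη4 : η ≤ 1/4 := by linarith only [hηCa, hηCa0, hη0.le]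
  set K₁ : ℝ := H + (|θ| + Cd) / r + H * (Ca + 1) + H * c₃ with hK₁
  have hdivnn : 0 ≤ (|θ| + Cd) / r := by
    apply div_nonneg _ hr.le
    have := abs_nonneg θ
    linarith
  have hK₁0 : 0 ≤ K₁ := by
    rw [hK₁]
    have h1 : 0 ≤ H * (Ca + 1) := by positivity
    have h2 : 0 ≤ H * c₃ := mul_nonneg hH.le hc₃0
    linarith
  set E₁ : ℝ := Real.exp (K₁ * Real.log (H / η)) with hE₁
  have hE₁1 : 1 ≤ E₁ := by
    rw [hE₁]
    apply Real.one_le_exp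
    apply mul_nonneg hK₁0
    apply Real.log_nonneg
    rw [le_div_iff₀ hη0]
    linarith
  clear_value c₁ c₃ lam η K₁ E₁
  have hcoef0 : (0:ℝ) < 1 + |θ| + Cd := by
    have := abs_nonneg θ
    linarith
  have hfac0 : (0:ℝ) < 1 + 2 * c₃ * lam := by linarith only [mul_nonneg hc₃0 hlam0.le]
  refine ⟨(1 + |θ| + Cd) * E₁ * (1 + 2 * c₃ * lam),
    mul_pos (mul_pos hcoef0 (by linarith)) hfac0, ?_⟩
  intro ν hν U V W hV heq hW x hx0 hxH
  obtain ⟨hν0, hν1⟩ := hν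
  set D₀ : ℝ := ‖V H‖ + ‖W H‖ with hD₀def
  have hD₀0 : 0 ≤ D₀ := by positivity
  clear_value D₀
  set P : ℝ → ℂ := fun t => (θ:ℂ) * W t - (δ t : ℂ) * V t with hPdef
  set Pd : ℝ → ℂ := fun t => -(θ:ℂ) * ((α t : ℂ) + Complex.I * (ν:ℂ)) * V t
    - ((deriv δ t : ℝ) : ℂ) * V t - (δ t : ℂ) * W t with hPddef
  -- derivative of P
  have hPd : ∀ t : ℝ, 0 < t → HasDerivAt P (Pd t) t := by
    intro t ht
    have hLt : -L ≤ t := by linarith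
    have h1 := (hW t hLt).const_mul (θ:ℂ)
    have h2 := ((hδdiff t (by linarith)).ofReal_comp).mul (hV t hLt)
    have h3 := h1.sub h2
    rw [hPdef, hPddef]
    exact h3.congr_deriv (by beta_reduce; ring)
  -- algebraic identity from the second equation
  have hzU : ∀ t : ℝ, 0 < t →
      ((α t : ℂ) + Complex.I * (ν:ℂ)) * U t = Complex.I * P t := by
    intro t ht
    have h := heq t (by linarith)
    rw [hPdef]
    linear_combination -h
  have hzlow : ∀ t : ℝ, 0 < t → t ≤ H →
      Real.sqrt (r^2 * t^2 + ν^2) ≤ ‖(α t : ℂ) + Complex.I * (ν:ℂ)‖ := by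
    intro t h1 h2
    have e : ‖(α t : ℂ) + Complex.I * (ν:ℂ)‖ = Real.sqrt ((α t)^2 + ν^2) := by
      rw [show (α t : ℂ) + Complex.I * (ν:ℂ) = (α t : ℂ) + (ν:ℂ) * Complex.I by ring,
        Complex.norm_add_mul_I]
    rw [e]
    apply Real.sqrt_le_sqrt
    have h3 := hαr t ⟨by linarith, h2⟩
    rw [abs_of_pos h1] at h3
    have h4 : (r*t)^2 ≤ (α t)^2 := by
      rw [← _root_.sq_abs (α t)]
      exact pow_le_pow_left₀ (by positivity) h3 2
    linarith only [h4]
  have hzup : ∀ t : ℝ, 0 < t → ‖(α t : ℂ) + Complex.I * (ν:ℂ)‖ ≤ Ca + 1 := by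
    intro t ht
    calc ‖(α t : ℂ) + Complex.I * (ν:ℂ)‖ ≤ ‖(α t : ℂ)‖ + ‖Complex.I * (ν:ℂ)‖ := norm_add_le _ _
      _ = |α t| + ν := by
          rw [norm_mul, Complex.norm_I, one_mul, Complex.norm_real, Complex.norm_real,
            Real.norm_eq_abs, Real.norm_eq_abs, abs_of_pos hν0]
      _ ≤ Ca + 1 := add_le_add (hCa t (by linarith)) hν1
  have hrtz : ∀ t : ℝ, 0 < t → t ≤ H →
      r * t ≤ ‖(α t : ℂ) + Complex.I * (ν:ℂ)‖ := by
    intro t h1 h2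
    refine le_trans ?_ (hzlow t h1 h2)
    rw [show r^2 * t^2 + ν^2 = (r*t)^2 + ν^2 by ring]
    refine le_trans ?_ (Real.sqrt_le_sqrt (by linarith only [sq_nonneg ν] : (r*t)^2 ≤ (r*t)^2 + ν^2))
    rw [Real.sqrt_sq (by positivity)]
  have hUP : ∀ t : ℝ, 0 < t →
      ‖(α t : ℂ) + Complex.I * (ν:ℂ)‖ * ‖U t‖ = ‖P t‖ := by
    intro t ht
    rw [← norm_mul, hzU t ht, norm_mul, Complex.norm_I, one_mul]
  have htU : ∀ t : ℝ, 0 < t → t ≤ H → r * (t * ‖U t‖) ≤ ‖P t‖ := by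
    intro t h1 h2
    calc r * (t * ‖U t‖) = (r*t) * ‖U t‖ := by ring
      _ ≤ ‖(α t : ℂ) + Complex.I * (ν:ℂ)‖ * ‖U t‖ :=
          mul_le_mul_of_nonneg_right (hrtz t h1 h2) (norm_nonneg _)
      _ = ‖P t‖ := hUP t h1
  -- norm of Pd
  have hPdnorm : ∀ t : ℝ, 0 < t → t ≤ H → ‖Pd t‖ ≤ c₁ * ‖V t‖ + Cd * ‖W t‖ := by
    intro t h1 h2
    rw [hPddef]
    have e1 : ‖-(θ:ℂ) * ((α t : ℂ) + Complex.I * (ν:ℂ)) * V t‖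
        = |θ| * (‖(α t : ℂ) + Complex.I * (ν:ℂ)‖ * ‖V t‖) := by
      rw [norm_mul, norm_mul, norm_neg, Complex.norm_real, Real.norm_eq_abs, mul_assoc]
    have e2 : ‖((deriv δ t : ℝ) : ℂ) * V t‖ = |deriv δ t| * ‖V t‖ := by
      rw [norm_mul, Complex.norm_real, Real.norm_eq_abs]
    have e3 : ‖(δ t : ℂ) * W t‖ = |δ t| * ‖W t‖ := by
      rw [norm_mul, Complex.norm_real, Real.norm_eq_abs]
    have t1 : ‖(α t : ℂ) + Complex.I * (ν:ℂ)‖ * ‖V t‖ ≤ (Ca + 1) * ‖V t‖ :=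
      mul_le_mul_of_nonneg_right (hzup t h1) (norm_nonneg _)
    have t2 : |deriv δ t| * ‖V t‖ ≤ Cd' * ‖V t‖ :=
      mul_le_mul_of_nonneg_right (hCd' t ⟨h1.le, h2⟩) (norm_nonneg _)
    have t3 : |δ t| * ‖W t‖ ≤ Cd * ‖W t‖ :=
      mul_le_mul_of_nonneg_right (hCd t (by linarith)) (norm_nonneg _)
    calc ‖_ - _ - _‖ ≤ ‖-(θ:ℂ) * ((α t : ℂ) + Complex.I * (ν:ℂ)) * V t‖
          + ‖((deriv δ t : ℝ) : ℂ) * V t‖ + ‖(δ t : ℂ) * W t‖ := by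
          refine le_trans (norm_sub_le _ _) ?_
          have := norm_sub_le (-(θ:ℂ) * ((α t : ℂ) + Complex.I * (ν:ℂ)) * V t)
            (((deriv δ t : ℝ) : ℂ) * V t)
          linarith
      _ ≤ |θ| * ((Ca + 1) * ‖V t‖) + Cd' * ‖V t‖ + Cd * ‖W t‖ := by
          rw [e1, e2, e3]
          have := mul_le_mul_of_nonneg_left t1 (abs_nonneg θ)
          linarith
      _ = c₁ * ‖V t‖ + Cd * ‖W t‖ := by rw [hc₁]; ring
  clear_value P Pd
  -- the vector (V, W, P) and its derivative
  set f1 : ℝ → ℂ × ℂ × ℂ := fun t => (V t, W t, P t) with hf1def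
  set f1d : ℝ → ℂ × ℂ × ℂ := fun t => (W t + Complex.I * (θ:ℂ) * U t,
      Complex.I * (δ t : ℂ) * U t - ((α t : ℂ) + Complex.I * (ν:ℂ)) * V t, Pd t) with hf1ddef
  have hf1deriv : ∀ t : ℝ, 0 < t → HasDerivAt f1 (f1d t) t := by
    intro t ht
    exact (hV t (by linarith)).prodMk ((hW t (by linarith)).prodMk (hPd t ht))
  have hnormf1 : ∀ t, ‖f1 t‖ = max ‖V t‖ (max ‖W t‖ ‖P t‖) := fun t => rfl
  have hVle : ∀ t, ‖V t‖ ≤ ‖f1 t‖ := fun t => by rw [hnormf1]; exact le_max_left _ _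
  have hWle : ∀ t, ‖W t‖ ≤ ‖f1 t‖ := fun t => by
    rw [hnormf1]; exact le_trans (le_max_left _ _) (le_max_right _ _)
  have hPle : ∀ t, ‖P t‖ ≤ ‖f1 t‖ := fun t => by
    rw [hnormf1]; exact le_trans (le_max_right _ _) (le_max_right _ _)
  have hcomp1 : ∀ t, ‖W t + Complex.I * (θ:ℂ) * U t‖ ≤ ‖W t‖ + |θ| * ‖U t‖ := by
    intro t
    have e : ‖Complex.I * (θ:ℂ) * U t‖ = |θ| * ‖U t‖ := by
      rw [norm_mul, norm_mul, Complex.norm_I, one_mul, Complex.norm_real, Real.norm_eq_abs]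
    calc ‖W t + Complex.I * (θ:ℂ) * U t‖ ≤ ‖W t‖ + ‖Complex.I * (θ:ℂ) * U t‖ := norm_add_le _ _
      _ = ‖W t‖ + |θ| * ‖U t‖ := by rw [e]
  have hcomp2 : ∀ t, 0 < t →
      ‖Complex.I * (δ t : ℂ) * U t - ((α t : ℂ) + Complex.I * (ν:ℂ)) * V t‖
        ≤ Cd * ‖U t‖ + (Ca + 1) * ‖V t‖ := by
    intro t ht
    have e : ‖Complex.I * (δ t : ℂ) * U t‖ = |δ t| * ‖U t‖ := by
      rw [norm_mul, norm_mul, Complex.norm_I, one_mul, Complex.norm_real, Real.norm_eq_abs]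
    calc ‖Complex.I * (δ t : ℂ) * U t - ((α t : ℂ) + Complex.I * (ν:ℂ)) * V t‖
        ≤ ‖Complex.I * (δ t : ℂ) * U t‖ + ‖((α t : ℂ) + Complex.I * (ν:ℂ)) * V t‖ :=
          norm_sub_le _ _
      _ = |δ t| * ‖U t‖ + ‖(α t : ℂ) + Complex.I * (ν:ℂ)‖ * ‖V t‖ := by rw [e, norm_mul]
      _ ≤ Cd * ‖U t‖ + (Ca + 1) * ‖V t‖ :=
          add_le_add (mul_le_mul_of_nonneg_right (hCd t (by linarith)) (norm_nonneg _))
            (mul_le_mul_of_nonneg_right (hzup t ht) (norm_nonneg _))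
  -- region-1 pointwise differential bound
  have hbd1 : ∀ t : ℝ, 0 < t → t ≤ H → t * ‖f1d t‖ ≤ K₁ * ‖f1 t‖ := by
    intro t h1 h2
    have hN0 : 0 ≤ ‖f1 t‖ := norm_nonneg _
    have hexpand : K₁ * ‖f1 t‖ = H * ‖f1 t‖ + (|θ| + Cd)/r * ‖f1 t‖
        + (H * (Ca + 1)) * ‖f1 t‖ + (H * c₃) * ‖f1 t‖ := by rw [hK₁]; ring
    have hpos1 : 0 ≤ (H * (Ca + 1)) * ‖f1 t‖ := by positivity
    have hpos2 : 0 ≤ (H * c₃) * ‖f1 t‖ := mul_nonneg (mul_nonneg hH.le hc₃0) hN0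
    have hpos3 : 0 ≤ (|θ| + Cd)/r * ‖f1 t‖ := mul_nonneg hdivnn hN0
    have hpos4 : 0 ≤ H * ‖f1 t‖ := mul_nonneg hH.le hN0
    have hUb : |θ| * (t * ‖U t‖) ≤ (|θ| + Cd)/r * ‖f1 t‖ := by
      have h3 := htU t h1 h2
      have h4 : ‖P t‖ ≤ ‖f1 t‖ := hPle t
      rw [div_mul_eq_mul_div, le_div_iff₀ hr]
      linarith only [mul_le_mul_of_nonneg_left h3 (abs_nonneg θ),
        mul_le_mul_of_nonneg_left h4 (abs_nonneg θ), mul_nonneg hCd0 hN0]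
    have hUb2 : Cd * (t * ‖U t‖) ≤ (|θ| + Cd)/r * ‖f1 t‖ := by
      have h3 := htU t h1 h2
      have h4 : ‖P t‖ ≤ ‖f1 t‖ := hPle t
      rw [div_mul_eq_mul_div, le_div_iff₀ hr]
      linarith only [mul_le_mul_of_nonneg_left h3 hCd0,
        mul_le_mul_of_nonneg_left h4 hCd0, mul_nonneg (abs_nonneg θ) hN0]
    have hVt : t * ‖V t‖ ≤ H * ‖f1 t‖ := mul_le_mul h2 (hVle t) (norm_nonneg _) hH.le
    have hWt : t * ‖W t‖ ≤ H * ‖f1 t‖ := mul_le_mul h2 (hWle t) (norm_nonneg _) hH.le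
    have hnf1d : ‖f1d t‖ = max ‖W t + Complex.I * (θ:ℂ) * U t‖
        (max ‖Complex.I * (δ t : ℂ) * U t - ((α t : ℂ) + Complex.I * (ν:ℂ)) * V t‖ ‖Pd t‖) := rfl
    rw [hnf1d, mul_max_of_nonneg _ _ h1.le, mul_max_of_nonneg _ _ h1.le]
    refine max_le ?_ (max_le ?_ ?_)
    · calc t * ‖W t + Complex.I * (θ:ℂ) * U t‖ ≤ t * (‖W t‖ + |θ| * ‖U t‖) :=
          mul_le_mul_of_nonneg_left (hcomp1 t) h1.le
        _ = t * ‖W t‖ + |θ| * (t * ‖U t‖) := by ring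
        _ ≤ H * ‖f1 t‖ + (|θ| + Cd)/r * ‖f1 t‖ := add_le_add hWt hUb
        _ ≤ K₁ * ‖f1 t‖ := by rw [hexpand]; linarith only [hpos1, hpos2]
    · calc t * ‖Complex.I * (δ t : ℂ) * U t - ((α t : ℂ) + Complex.I * (ν:ℂ)) * V t‖
          ≤ t * (Cd * ‖U t‖ + (Ca + 1) * ‖V t‖) :=
          mul_le_mul_of_nonneg_left (hcomp2 t h1) h1.le
        _ = Cd * (t * ‖U t‖) + (Ca + 1) * (t * ‖V t‖) := by ring
        _ ≤ (|θ| + Cd)/r * ‖f1 t‖ + (Ca + 1) * (H * ‖f1 t‖) :=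
          add_le_add hUb2 (mul_le_mul_of_nonneg_left hVt (by linarith))
        _ ≤ K₁ * ‖f1 t‖ := by rw [hexpand]; linarith only [hpos2, hpos4]
    · calc t * ‖Pd t‖ ≤ t * (c₁ * ‖V t‖ + Cd * ‖W t‖) :=
          mul_le_mul_of_nonneg_left (hPdnorm t h1 h2) h1.le
        _ = c₁ * (t * ‖V t‖) + Cd * (t * ‖W t‖) := by ring
        _ ≤ c₁ * (H * ‖f1 t‖) + Cd * (H * ‖f1 t‖) :=
          add_le_add (mul_le_mul_of_nonneg_left hVt hc₁0) (mul_le_mul_of_nonneg_left hWt hCd0)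
        _ ≤ K₁ * ‖f1 t‖ := by rw [hexpand, hc₃]; linarith only [hpos1, hpos3, hpos4]
  -- region-1 Grönwall estimate
  set D₁ : ℝ := (1 + |θ| + Cd) * D₀ * E₁ with hD₁def
  have hD₁0 : 0 ≤ D₁ := by
    rw [hD₁def]
    exact mul_nonneg (mul_nonneg hcoef0.le hD₀0) (by linarith)
  have hf1H : ‖f1 H‖ ≤ (1 + |θ| + Cd) * D₀ := by
    have hPH : ‖P H‖ ≤ |θ| * ‖W H‖ + Cd * ‖V H‖ := by
      rw [hPdef]
      calc ‖(θ:ℂ) * W H - (δ H : ℂ) * V H‖ ≤ ‖(θ:ℂ) * W H‖ + ‖(δ H : ℂ) * V H‖ := norm_sub_le _ _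
        _ = |θ| * ‖W H‖ + |δ H| * ‖V H‖ := by
            rw [norm_mul, norm_mul, Complex.norm_real, Complex.norm_real,
              Real.norm_eq_abs, Real.norm_eq_abs]
        _ ≤ |θ| * ‖W H‖ + Cd * ‖V H‖ :=
            add_le_add le_rfl (mul_le_mul_of_nonneg_right (hCd H (by linarith)) (norm_nonneg _))
    have hnn : 0 ≤ |θ| + Cd := by linarith [abs_nonneg θ]
    rw [hnormf1]
    have hD : D₀ = ‖V H‖ + ‖W H‖ := hD₀def
    refine max_le ?_ (max_le ?_ ?_)
    · linarith only [hD, mul_nonneg hnn hD₀0, norm_nonneg (W H)]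
    · linarith only [hD, mul_nonneg hnn hD₀0, norm_nonneg (V H)]
    · have e1 : |θ| * D₀ = |θ| * ‖V H‖ + |θ| * ‖W H‖ := by rw [hD]; ring
      have e2 : Cd * D₀ = Cd * ‖V H‖ + Cd * ‖W H‖ := by rw [hD]; ring
      linarith only [hD, hPH, e1, e2, mul_nonneg (abs_nonneg θ) (norm_nonneg (V H)),
        mul_nonneg hCd0 (norm_nonneg (W H)), norm_nonneg (V H), norm_nonneg (W H)]
  clear_value D₁
  have hreg1 : ∀ t, 0 < t → η ≤ t → t ≤ H → ‖f1 t‖ ≤ D₁ := by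
    intro t h0 h1 h2
    have key := gronwall_log (f := f1) (f' := f1d) (K := K₁) h0 h2
      (fun s hs => hf1deriv s (lt_of_lt_of_le h0 hs.1))
      (fun s hs => hbd1 s (lt_of_lt_of_le h0 hs.1) hs.2)
    refine key.trans ?_
    have hexp : Real.exp (K₁ * Real.log (H / t)) ≤ E₁ := by
      rw [hE₁]
      apply Real.exp_le_exp.2
      apply mul_le_mul_of_nonneg_left _ hK₁0
      have hdiv : H / t ≤ H / η := by gcongr
      exact Real.log_le_log (by positivity) hdiv
    rw [hD₁def]
    calc ‖f1 H‖ * Real.exp (K₁ * Real.log (H / t)) ≤ ((1 + |θ| + Cd) * D₀) * E₁ :=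
        mul_le_mul hf1H hexp (Real.exp_nonneg _) (mul_nonneg hcoef0.le hD₀0)
      _ = (1 + |θ| + Cd) * D₀ * E₁ := by ring
  -- main estimate on ‖P x‖
  have hPx : ‖P x‖ ≤ D₁ * (1 + 2 * c₃ * lam) := by
    rcases le_or_gt η x with hxc | hxc
    · have h := (hPle x).trans (hreg1 x hx0 hxc hxH)
      have h9 : 0 ≤ D₁ * (c₃ * lam) := mul_nonneg hD₁0 (mul_nonneg hc₃0 hlam0.le)
      linarith only [h, h9]
    · -- region 2: weighted vector (V, W, lam • P)
      set f2 : ℝ → ℂ × ℂ × ℂ := fun t => (V t, W t, lam • P t) with hf2def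
      set f2d : ℝ → ℂ × ℂ × ℂ := fun t => (W t + Complex.I * (θ:ℂ) * U t,
          Complex.I * (δ t : ℂ) * U t - ((α t : ℂ) + Complex.I * (ν:ℂ)) * V t,
          lam • Pd t) with hf2ddef
      have hf2deriv : ∀ t : ℝ, 0 < t → HasDerivAt f2 (f2d t) t := by
        intro t ht
        exact (hV t (by linarith)).prodMk
          ((hW t (by linarith)).prodMk ((hPd t ht).const_smul lam))
      have hsmul : ∀ w : ℂ, ‖lam • w‖ = lam * ‖w‖ := fun w => by
        rw [norm_smul, Real.norm_eq_abs, abs_of_pos hlam0]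
      have hnormf2 : ∀ t, ‖f2 t‖ = max ‖V t‖ (max ‖W t‖ (lam * ‖P t‖)) := by
        intro t
        have e : ‖f2 t‖ = max ‖V t‖ (max ‖W t‖ ‖lam • P t‖) := rfl
        rw [e, hsmul]
      have hVle2 : ∀ t, ‖V t‖ ≤ ‖f2 t‖ := fun t => by
        rw [hnormf2]; exact le_max_left _ _
      have hWle2 : ∀ t, ‖W t‖ ≤ ‖f2 t‖ := fun t => by
        rw [hnormf2]; exact le_trans (le_max_left _ _) (le_max_right _ _)
      have hPle2 : ∀ t, lam * ‖P t‖ ≤ ‖f2 t‖ := fun t => by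
        rw [hnormf2]; exact le_trans (le_max_right _ _) (le_max_right _ _)
      -- region-2 pointwise differential bound
      have hbd2 : ∀ t : ℝ, 0 < t → t ≤ η → t * ‖f2d t‖ ≤ (1/2) * ‖f2 t‖ := by
        intro t h1 h2
        have h2H : t ≤ H := le_trans h2 hηH
        have hN0 : 0 ≤ ‖f2 t‖ := norm_nonneg _
        have htUP := htU t h1 h2H
        have hX0 : 0 ≤ t * ‖U t‖ := mul_nonneg h1.le (norm_nonneg _)
        have hθU : |θ| * (t * ‖U t‖) ≤ (1/4) * (lam * ‖P t‖) := by
          have h5 : lam * (r * (t * ‖U t‖)) ≤ lam * ‖P t‖ :=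
            mul_le_mul_of_nonneg_left htUP hlam0.le
          have h6 : lam * (r * (t * ‖U t‖)) = (4 * (|θ| + Cd) + r) * (t * ‖U t‖) := by
            rw [← hrlam]; ring
          have h7 : 0 ≤ (4 * Cd + r) * (t * ‖U t‖) := mul_nonneg (by linarith) hX0
          linarith only [h5, h6, h7]
        have hδU : Cd * (t * ‖U t‖) ≤ (1/4) * (lam * ‖P t‖) := by
          have h5 : lam * (r * (t * ‖U t‖)) ≤ lam * ‖P t‖ :=
            mul_le_mul_of_nonneg_left htUP hlam0.le
          have h6 : lam * (r * (t * ‖U t‖)) = (4 * (|θ| + Cd) + r) * (t * ‖U t‖) := by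
            rw [← hrlam]; ring
          have h7 : 0 ≤ (4 * |θ| + r) * (t * ‖U t‖) :=
            mul_nonneg (by linarith [abs_nonneg θ]) hX0
          linarith only [h5, h6, h7]
        have hPf2 : lam * ‖P t‖ ≤ ‖f2 t‖ := hPle2 t
        have hnf2d : ‖f2d t‖ = max ‖W t + Complex.I * (θ:ℂ) * U t‖
            (max ‖Complex.I * (δ t : ℂ) * U t - ((α t : ℂ) + Complex.I * (ν:ℂ)) * V t‖
              (lam * ‖Pd t‖)) := by
          have e : ‖f2d t‖ = max ‖W t + Complex.I * (θ:ℂ) * U t‖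
            (max ‖Complex.I * (δ t : ℂ) * U t - ((α t : ℂ) + Complex.I * (ν:ℂ)) * V t‖
              ‖lam • Pd t‖) := rfl
          rw [e, hsmul]
        rw [hnf2d, mul_max_of_nonneg _ _ h1.le, mul_max_of_nonneg _ _ h1.le]
        have hWq : t * ‖W t‖ ≤ (1/4) * ‖f2 t‖ := by
          have q1 : t * ‖W t‖ ≤ (1/4) * ‖W t‖ :=
            mul_le_mul_of_nonneg_right (le_trans h2 hη4) (norm_nonneg _)
          linarith only [q1, hWle2 t, norm_nonneg (W t)]
        have hVq : (Ca + 1) * (t * ‖V t‖) ≤ (1/4) * ‖f2 t‖ := by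
          have q0 : 0 ≤ ‖V t‖ := norm_nonneg _
          have q1 : (Ca + 1) * t ≤ 1/4 := by
            have q1a : (Ca + 1) * t ≤ (Ca + 1) * η :=
              mul_le_mul_of_nonneg_left h2 (by linarith)
            linarith only [q1a, hηCa, hη0.le]
          have q2 : (Ca + 1) * (t * ‖V t‖) ≤ (1/4) * ‖V t‖ := by
            have q2a := mul_le_mul_of_nonneg_right q1 q0
            linarith only [q2a]
          linarith only [q2, hVle2 t]
        refine max_le ?_ (max_le ?_ ?_)
        · calc t * ‖W t + Complex.I * (θ:ℂ) * U t‖ ≤ t * (‖W t‖ + |θ| * ‖U t‖) :=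
              mul_le_mul_of_nonneg_left (hcomp1 t) h1.le
            _ = t * ‖W t‖ + |θ| * (t * ‖U t‖) := by ring
            _ ≤ (1/4) * ‖f2 t‖ + (1/4) * (lam * ‖P t‖) := add_le_add hWq hθU
            _ ≤ (1/2) * ‖f2 t‖ := by linarith only [hPf2]
        · calc t * ‖Complex.I * (δ t : ℂ) * U t - ((α t : ℂ) + Complex.I * (ν:ℂ)) * V t‖
              ≤ t * (Cd * ‖U t‖ + (Ca + 1) * ‖V t‖) :=
              mul_le_mul_of_nonneg_left (hcomp2 t h1) h1.le
            _ = Cd * (t * ‖U t‖) + (Ca + 1) * (t * ‖V t‖) := by ring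
            _ ≤ (1/4) * (lam * ‖P t‖) + (1/4) * ‖f2 t‖ := add_le_add hδU hVq
            _ ≤ (1/2) * ‖f2 t‖ := by linarith only [hPf2]
        · have q1 : t * ‖Pd t‖ ≤ t * (c₁ * ‖V t‖ + Cd * ‖W t‖) :=
            mul_le_mul_of_nonneg_left (hPdnorm t h1 h2H) h1.le
          have q2 : t * ‖V t‖ ≤ η * ‖f2 t‖ := mul_le_mul h2 (hVle2 t) (norm_nonneg _) hη0.le
          have q3 : t * ‖W t‖ ≤ η * ‖f2 t‖ := mul_le_mul h2 (hWle2 t) (norm_nonneg _) hη0.le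
          have q4 : 0 ≤ lam * η := mul_nonneg hlam0.le hη0.le
          calc t * (lam * ‖Pd t‖) = lam * (t * ‖Pd t‖) := by ring
            _ ≤ lam * (t * (c₁ * ‖V t‖ + Cd * ‖W t‖)) :=
              mul_le_mul_of_nonneg_left q1 hlam0.le
            _ = lam * c₁ * (t * ‖V t‖) + lam * Cd * (t * ‖W t‖) := by ring
            _ ≤ lam * c₁ * (η * ‖f2 t‖) + lam * Cd * (η * ‖f2 t‖) :=
              add_le_add (mul_le_mul_of_nonneg_left q2 (mul_nonneg hlam0.le hc₁0))
                (mul_le_mul_of_nonneg_left q3 (mul_nonneg hlam0.le hCd0))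
            _ ≤ (1/2) * ‖f2 t‖ := by
              have q5 : 4 * lam * (c₃ + 1) * η * ‖f2 t‖ ≤ 1 * ‖f2 t‖ :=
                mul_le_mul_of_nonneg_right hηlam hN0
              rw [one_mul] at q5
              have q6 : 0 ≤ lam * η * ‖f2 t‖ := mul_nonneg q4 hN0
              have q7 : lam * c₁ * (η * ‖f2 t‖) + lam * Cd * (η * ‖f2 t‖)
                  = lam * c₃ * η * ‖f2 t‖ := by rw [hc₃]; ring
              linarith only [q5, q6, q7, hN0]
      -- region-2 Grönwall estimate
      have hreg2 : ∀ t, x ≤ t → t ≤ η →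
          ‖f2 t‖ ≤ (lam * D₁) * Real.exp ((1/2) * Real.log (η / t)) := by
        intro t ht1 ht2
        have ht0 : 0 < t := lt_of_lt_of_le hx0 ht1
        have key := gronwall_log (f := f2) (f' := f2d) (K := (1/2 : ℝ)) ht0 ht2
          (fun s hs => hf2deriv s (lt_of_lt_of_le ht0 hs.1))
          (fun s hs => hbd2 s (lt_of_lt_of_le ht0 hs.1) hs.2)
        refine key.trans (mul_le_mul_of_nonneg_right ?_ (Real.exp_nonneg _))
        have hf1η := hreg1 η hη0 le_rfl hηH
        rw [hnormf2 η]
        refine max_le ?_ (max_le ?_ ?_)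
        · have := (hVle η).trans hf1η
          have h9 : 0 ≤ (lam - 1) * D₁ := mul_nonneg (by linarith) hD₁0
          linarith only [this, h9]
        · have := (hWle η).trans hf1η
          have h9 : 0 ≤ (lam - 1) * D₁ := mul_nonneg (by linarith) hD₁0
          linarith only [this, h9]
        · exact mul_le_mul_of_nonneg_left ((hPle η).trans hf1η) hlam0.le
      -- second pass: integrate the equation for P backwards
      set S := Real.log (η / x) with hSdef
      have hS0 : 0 ≤ S := Real.log_nonneg (by rw [le_div_iff₀ hx0]; linarith)
      have hexpS : Real.exp (-S) = x / η := by
        rw [hSdef, Real.exp_neg, Real.exp_log (div_pos hη0 hx0), inv_div]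
      have hmem : ∀ s ∈ Set.Icc (0:ℝ) S, η * Real.exp (-s) ∈ Set.Icc x η := by
        intro s hs
        constructor
        · have q1 : Real.exp (-S) ≤ Real.exp (-s) := Real.exp_le_exp.2 (by linarith [hs.2])
          rw [hexpS] at q1
          calc x = η * (x / η) := by field_simp [hη0.ne']
            _ ≤ η * Real.exp (-s) := mul_le_mul_of_nonneg_left q1 hη0.le
        · have q1 : Real.exp (-s) ≤ 1 := by
            rw [show (1:ℝ) = Real.exp 0 by simp]
            exact Real.exp_le_exp.2 (by linarith [hs.1])
          calc η * Real.exp (-s) ≤ η * 1 := mul_le_mul_of_nonneg_left q1 hη0.le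
            _ = η := mul_one η
      set c : ℝ := c₃ * (lam * D₁) * η with hcdef
      have hc0 : 0 ≤ c := by
        rw [hcdef]
        exact mul_nonneg (mul_nonneg hc₃0 (mul_nonneg hlam0.le hD₁0)) hη0.le
      clear_value c S
      set Bf : ℝ → ℝ := fun s => D₁ + 2*c - 2*c*Real.exp (-(s/2)) with hBfdef
      set Bd : ℝ → ℝ := fun s => c * Real.exp (-(s/2)) with hBddef
      have hBderiv : ∀ s : ℝ, HasDerivAt Bf (Bd s) s := by
        intro s
        have q1 : HasDerivAt (fun y : ℝ => -(y/2)) (-(1/2)) s := ((hasDerivAt_id s).div_const 2).neg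
        have q2 := (Real.hasDerivAt_exp (-(s/2))).comp s q1
        have q3 := (q2.const_mul (2*c)).const_sub (D₁ + 2*c)
        rw [hBfdef, hBddef]
        exact q3.congr_deriv (by beta_reduce; ring)
      set hfun : ℝ → ℂ := fun s => P (η * Real.exp (-s)) with hhdef
      have hhderiv : ∀ s ∈ Set.Icc (0:ℝ) S,
          HasDerivAt hfun ((η * (Real.exp (-s) * (-1))) • Pd (η * Real.exp (-s))) s := by
        intro s hs
        have q1 : HasDerivAt (fun y : ℝ => η * Real.exp (-y)) (η * (Real.exp (-s) * (-1))) s :=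
          ((Real.hasDerivAt_exp (-s)).comp s (hasDerivAt_neg s)).const_mul η
        exact (hPd _ (lt_of_lt_of_le hx0 (hmem s hs).1)).scomp s q1
      have hbound2 : ∀ s ∈ Set.Ico (0:ℝ) S,
          ‖(η * (Real.exp (-s) * (-1))) • Pd (η * Real.exp (-s))‖ ≤ Bd s := by
        intro s hs
        have hm := hmem s (Set.Ico_subset_Icc_self hs)
        have ht0 : 0 < η * Real.exp (-s) := lt_of_lt_of_le hx0 hm.1
        have hlog : Real.log (η / (η * Real.exp (-s))) = s := by
          rw [show η / (η * Real.exp (-s)) = Real.exp s by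
            rw [Real.exp_neg]; field_simp [hη0.ne'], Real.log_exp]
        have hft := hreg2 _ hm.1 hm.2
        rw [hlog] at hft
        have hnormsmul : ‖(η * (Real.exp (-s) * (-1))) • Pd (η * Real.exp (-s))‖
            = (η * Real.exp (-s)) * ‖Pd (η * Real.exp (-s))‖ := by
          rw [norm_smul, Real.norm_eq_abs]
          congr 1
          rw [abs_of_nonpos (by linarith only [mul_nonneg hη0.le (Real.exp_pos (-s)).le] :
            η * (Real.exp (-s) * (-1)) ≤ 0)]
          ring
        rw [hnormsmul, hBddef]
        have hPdt : ‖Pd (η * Real.exp (-s))‖ ≤ c₃ * ((lam * D₁) * Real.exp ((1/2) * s)) := by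
          have q1 := hPdnorm _ ht0 (le_trans hm.2 hηH)
          have qV : ‖V (η * Real.exp (-s))‖ ≤ (lam * D₁) * Real.exp ((1/2) * s) :=
            le_trans (hVle2 _) hft
          have qW : ‖W (η * Real.exp (-s))‖ ≤ (lam * D₁) * Real.exp ((1/2) * s) :=
            le_trans (hWle2 _) hft
          calc ‖Pd (η * Real.exp (-s))‖
              ≤ c₁ * ‖V (η * Real.exp (-s))‖ + Cd * ‖W (η * Real.exp (-s))‖ := q1
            _ ≤ c₁ * ((lam * D₁) * Real.exp ((1/2) * s))
                + Cd * ((lam * D₁) * Real.exp ((1/2) * s)) :=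
                add_le_add (mul_le_mul_of_nonneg_left qV hc₁0)
                  (mul_le_mul_of_nonneg_left qW hCd0)
            _ = c₃ * ((lam * D₁) * Real.exp ((1/2) * s)) := by rw [hc₃]; ring
        calc (η * Real.exp (-s)) * ‖Pd (η * Real.exp (-s))‖
            ≤ (η * Real.exp (-s)) * (c₃ * ((lam * D₁) * Real.exp ((1/2) * s))) :=
            mul_le_mul_of_nonneg_left hPdt (mul_nonneg hη0.le (Real.exp_pos _).le)
          _ = c * (Real.exp (-s) * Real.exp ((1/2) * s)) := by rw [hcdef]; ring
          _ = c * Real.exp (-(s/2)) := by rw [← Real.exp_add]; congr 1; ring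
      have hcont2 : ContinuousOn hfun (Set.Icc 0 S) :=
        fun s hs => (hhderiv s hs).continuousAt.continuousWithinAt
      have hB0 : ‖hfun 0‖ ≤ Bf 0 := by
        have e : hfun 0 = P η := by rw [hhdef]; simp
        have e2 : Bf 0 = D₁ := by rw [hBfdef]; norm_num
        rw [e, e2]
        exact (hPle η).trans (hreg1 η hη0 le_rfl hηH)
      have key2 := image_norm_le_of_norm_deriv_right_le_deriv_boundary hcont2
        (fun s hs => (hhderiv s (Set.Ico_subset_Icc_self hs)).hasDerivWithinAt)
        hB0 hBderiv hbound2 ⟨hS0, le_rfl⟩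
      have ehS : hfun S = P x := by
        rw [hhdef]
        simp only []
        congr 1
        rw [hexpS]
        field_simp [hη0.ne']
      rw [ehS] at key2
      have eBS : Bf S = D₁ + 2*c - 2*c*Real.exp (-(S/2)) := by rw [hBfdef]
      rw [eBS] at key2
      have hcle : c ≤ c₃ * lam * D₁ := by
        rw [hcdef]
        have h9 : 0 ≤ (1 - η) * (c₃ * lam * D₁) :=
          mul_nonneg (by linarith) (mul_nonneg (mul_nonneg hc₃0 hlam0.le) hD₁0)
        linarith only [h9]
      have h8 : 0 ≤ c * Real.exp (-(S/2)) := mul_nonneg hc0 (Real.exp_pos (-(S/2))).le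
      linarith only [key2, hcle, h8]
  -- conclusion
  have hm0 : (0:ℝ) < Real.sqrt (r^2 * x^2 + ν^2) := Real.sqrt_pos.2 (by positivity)
  rw [le_div_iff₀ hm0]
  calc ‖U x‖ * Real.sqrt (r^2 * x^2 + ν^2)
      ≤ ‖U x‖ * ‖(α x : ℂ) + Complex.I * (ν:ℂ)‖ :=
        mul_le_mul_of_nonneg_left (hzlow x hx0 hxH) (norm_nonneg _)
    _ = ‖P x‖ := by rw [mul_comm]; exact hUP x hx0
    _ ≤ D₁ * (1 + 2 * c₃ * lam) := hPx
    _ = (1 + |θ| + Cd) * E₁ * (1 + 2 * c₃ * lam) * D₀ := by rw [hD₁def]; ring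
end

section
/- Let L, H > 0 and let α : [-L,H] → ℝ be C¹ with α(0) = 0, α'(0) < 0, and r|x| ≤ |α(x)| for all x ∈ [-L,H] for some r > 0. Then lim_{ν→0⁺} ∫_{-L}^{H} ν / (α(x)² + ν²) dx = π / |α'(0)|. -/
open Filter MeasureTheory Set intervalIntegral Real

/-- The Lorentzian concentration limit underlying the limit absorption
principle: if `α` is C¹ on `[-L,H]` with `α(0) = 0`, `α'(0) < 0` and
`r|x| ≤ |α(x)|`, then `∫_{-L}^{H} ν/(α(x)² + ν²) dx → π/|α'(0)|` as `ν → 0⁺`. -/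
theorem lorentzian_concentration
    (L H r : ℝ) (hL : 0 < L) (hH : 0 < H) (hr : 0 < r)
    (α α' : ℝ → ℝ)
    (hαd : ∀ x ∈ Set.Icc (-L) H, HasDerivWithinAt α (α' x) (Set.Icc (-L) H) x)
    (hα'c : ContinuousOn α' (Set.Icc (-L) H))
    (hα0 : α 0 = 0) (hα'0 : α' 0 < 0)
    (hαr : ∀ x ∈ Set.Icc (-L) H, r * |x| ≤ |α x|) :
    Filter.Tendsto (fun ν : ℝ => ∫ x in (-L)..H, ν / ((α x)^2 + ν^2))
      (nhdsWithin 0 (Set.Ioi 0)) (nhds (Real.pi / |α' 0|)) := by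
  have hIcc0 : (0:ℝ) ∈ Set.Icc (-L) H := ⟨by linarith, hH.le⟩
  have ha : α' 0 ≠ 0 := ne_of_lt hα'0
  have hαc : ContinuousOn α (Set.Icc (-L) H) := fun x hx => (hαd x hx).continuousWithinAt
  set a := α' 0 with ha_def
  set f : ℝ → ℝ := fun w => 1 / ((a * w)^2 + 1) with hf
  set F : ℝ → ℝ → ℝ := fun ν w => (Set.Ioc (-L/ν) (H/ν)).indicator
      (fun w => 1 / ((α (ν * w) / ν)^2 + 1)) w with hFdef
  -- maps-to fact
  have hmap : ∀ ν : ℝ, 0 < ν → ∀ w ∈ Set.Ioc (-L/ν) (H/ν), ν * w ∈ Set.Icc (-L) H := by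
    intro ν hν w hw
    constructor
    · have := (div_lt_iff₀ hν).mp hw.1
      nlinarith
    · have := (le_div_iff₀ hν).mp hw.2
      nlinarith
  -- dominated convergence
  have key : Filter.Tendsto (fun ν => ∫ w, F ν w) (nhdsWithin 0 (Set.Ioi 0))
      (nhds (∫ w, f w)) := by
    apply MeasureTheory.tendsto_integral_filter_of_dominated_convergence
        (fun w => 1 / (r^2 * w^2 + 1))
    · -- measurability
      filter_upwards [self_mem_nhdsWithin] with ν (hν : ν ∈ Set.Ioi 0)
      simp only [hFdef]
      rw [aestronglyMeasurable_indicator_iff measurableSet_Ioc]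
      have hcont : ContinuousOn (fun w => 1 / ((α (ν * w) / ν)^2 + 1))
          (Set.Ioc (-L/ν) (H/ν)) := by
        apply ContinuousOn.div continuousOn_const
        · exact (((hαc.comp (continuous_mul_left ν).continuousOn
            (fun w hw => hmap ν hν w hw)).div_const ν).pow 2).add continuousOn_const
        · intro w _; positivity
      exact hcont.aestronglyMeasurable measurableSet_Ioc
    · -- domination
      filter_upwards [self_mem_nhdsWithin] with ν (hν : ν ∈ Set.Ioi 0)
      filter_upwards with w
      simp only [hFdef]
      by_cases hw : w ∈ Set.Ioc (-L/ν) (H/ν)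
      · rw [Set.indicator_of_mem hw]
        rw [Real.norm_eq_abs, abs_of_nonneg (by positivity)]
        have hmem : ν * w ∈ Set.Icc (-L) H := hmap ν hν w hw
        have h1 : r * |ν * w| ≤ |α (ν * w)| := hαr _ hmem
        have h2 : r^2 * w^2 ≤ (α (ν * w) / ν)^2 := by
          have hb : r * |w| ≤ |α (ν * w) / ν| := by
            rw [abs_div, abs_of_pos (show (0:ℝ) < ν from hν), le_div_iff₀ (show (0:ℝ) < ν from hν)]
            rw [abs_mul, abs_of_pos (show (0:ℝ) < ν from hν)] at h1
            nlinarith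
          have := mul_self_le_mul_self (by positivity) hb
          calc r^2 * w^2 = (r * |w|) * (r * |w|) := by rw [← sq_abs w]; ring
            _ ≤ |α (ν * w) / ν| * |α (ν * w) / ν| := this
            _ = (α (ν * w) / ν)^2 := by rw [← sq_abs (α (ν * w) / ν)]; ring
        apply one_div_le_one_div_of_le (by positivity)
        linarith
      · rw [Set.indicator_of_notMem hw, norm_zero]
        positivity
    · -- bound integrable
      have heq : (fun w : ℝ => 1 / (r^2 * w^2 + 1)) = fun w => (1 + (r * w)^2)⁻¹ := by
        funext w; rw [one_div]; congr 1; ring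
      rw [heq]
      exact integrable_inv_one_add_sq.comp_mul_left' hr.ne'
    · -- pointwise limit
      refine MeasureTheory.ae_of_all _ fun w => ?_
      have hbw : Filter.Tendsto (fun ν => α (ν * w) / ν) (nhdsWithin 0 (Set.Ioi 0))
          (nhds (a * w)) := by
        rcases eq_or_ne w 0 with rfl | hw
        · simp only [mul_zero, hα0, zero_div]
          simpa using (tendsto_const_nhds :
            Filter.Tendsto (fun _ : ℝ => (0:ℝ)) (nhdsWithin 0 (Set.Ioi 0)) (nhds 0))
        · have hslope := hasDerivWithinAt_iff_tendsto_slope.mp (hαd 0 hIcc0)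
          have hmul : Filter.Tendsto (fun ν : ℝ => ν * w) (nhdsWithin 0 (Set.Ioi 0))
              (nhdsWithin 0 (Set.Icc (-L) H \ {0})) := by
            rw [tendsto_nhdsWithin_iff]
            constructor
            · have : Filter.Tendsto (fun ν : ℝ => ν * w) (nhds 0) (nhds 0) := by
                simpa using (continuous_mul_right w).tendsto 0
              exact this.mono_left nhdsWithin_le_nhds
            · have hev : ∀ᶠ ν in nhdsWithin (0:ℝ) (Set.Ioi 0), ν < min L H / |w| := by
                apply eventually_nhdsWithin_of_eventually_nhds
                exact eventually_lt_nhds (by positivity)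
              filter_upwards [hev, self_mem_nhdsWithin] with ν h1 (h2 : ν ∈ Set.Ioi 0)
              have h2' : (0:ℝ) < ν := h2
              have habs : ν * |w| < min L H := by
                rw [lt_div_iff₀ (abs_pos.mpr hw)] at h1; linarith
              have h3 : ν * w ≤ ν * |w| := mul_le_mul_of_nonneg_left (le_abs_self w) h2'.le
              have h4 : ν * (-|w|) ≤ ν * w := mul_le_mul_of_nonneg_left (neg_abs_le w) h2'.le
              refine ⟨⟨?_, ?_⟩, ?_⟩
              · have := min_le_left L H; nlinarith
              · have := min_le_right L H; nlinarith
              · simp [mul_ne_zero h2'.ne' hw]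
          have hcomp : Filter.Tendsto (fun ν : ℝ => slope α 0 (ν * w) * w)
              (nhdsWithin 0 (Set.Ioi 0)) (nhds (a * w)) :=
            (hslope.comp hmul).mul_const w
          apply Filter.Tendsto.congr' _ hcomp
          filter_upwards [self_mem_nhdsWithin] with ν (hν : ν ∈ Set.Ioi 0)
          have hν' : (0:ℝ) < ν := hν
          rw [slope_def_field]
          rw [hα0]
          field_simp
          ring
      have hFw : ∀ᶠ ν in nhdsWithin (0:ℝ) (Set.Ioi 0),
          F ν w = 1 / ((α (ν * w) / ν)^2 + 1) := by
        have hev : ∀ᶠ ν in nhdsWithin (0:ℝ) (Set.Ioi 0), ν * |w| < min L H := by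
          apply eventually_nhdsWithin_of_eventually_nhds
          have : Filter.Tendsto (fun ν : ℝ => ν * |w|) (nhds 0) (nhds 0) := by
            simpa using (continuous_mul_right |w|).tendsto 0
          exact this.eventually_lt_const (by positivity)
        filter_upwards [hev, self_mem_nhdsWithin] with ν h1 (h2 : ν ∈ Set.Ioi 0)
        have h2' : (0:ℝ) < ν := h2
        simp only [hFdef]
        apply Set.indicator_of_mem
        have h3 : ν * w ≤ ν * |w| := mul_le_mul_of_nonneg_left (le_abs_self w) h2'.le
        have h4 : ν * (-|w|) ≤ ν * w := mul_le_mul_of_nonneg_left (neg_abs_le w) h2'.le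
        constructor
        · rw [div_lt_iff₀ h2']
          have := min_le_left L H; nlinarith
        · rw [le_div_iff₀ h2']
          have := min_le_right L H; nlinarith
      have hcont2 : Filter.Tendsto (fun ν => 1 / ((α (ν * w) / ν)^2 + 1))
          (nhdsWithin 0 (Set.Ioi 0)) (nhds (f w)) := by
        rw [hf]
        exact tendsto_const_nhds.div ((hbw.pow 2).add_const 1) (by positivity)
      exact Filter.Tendsto.congr' (Filter.EventuallyEq.symm hFw) hcont2
  -- value of the limit integral
  have hval : (∫ w, f w) = Real.pi / |a| := by
    have heq : f = fun w => (fun x : ℝ => (1 + x^2)⁻¹) (a * w) := by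
      funext w; simp only [hf, one_div]; congr 1; ring
    rw [heq, MeasureTheory.Measure.integral_comp_mul_left (fun x : ℝ => (1 + x^2)⁻¹) a,
      integral_univ_inv_one_add_sq, smul_eq_mul, abs_inv, inv_mul_eq_div]
  -- eventual equality with the original integral
  have heq : ∀ᶠ ν in nhdsWithin (0:ℝ) (Set.Ioi 0),
      (∫ w, F ν w) = ∫ x in (-L)..H, ν / ((α x)^2 + ν^2) := by
    filter_upwards [self_mem_nhdsWithin] with ν (hν : ν ∈ Set.Ioi 0)
    have hν' : (0:ℝ) < ν := hν
    have hν0 : ν ≠ 0 := hν'.ne'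
    have hord : -L/ν ≤ H/ν := by
      exact (div_le_div_iff_of_pos_right hν').mpr (by linarith)
    have h1 : (∫ w, F ν w) = ∫ w in (-L/ν)..(H/ν), 1 / ((α (ν * w) / ν)^2 + 1) := by
      rw [hFdef, MeasureTheory.integral_indicator measurableSet_Ioc,
        intervalIntegral.integral_of_le hord]
    rw [h1]
    calc ∫ w in (-L/ν)..(H/ν), 1 / ((α (ν * w) / ν)^2 + 1)
        = ∫ w in (-L/ν)..(H/ν), ν * (ν / ((α (ν * w))^2 + ν^2)) := by
          apply intervalIntegral.integral_congr
          intro w _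
          have hpos : (α (ν * w))^2 + ν^2 ≠ 0 := by positivity
          field_simp
      _ = ν * ∫ w in (-L/ν)..(H/ν), ν / ((α (ν * w))^2 + ν^2) :=
          intervalIntegral.integral_const_mul _ _
      _ = ν * (ν⁻¹ • ∫ x in (ν * (-L/ν))..(ν * (H/ν)), ν / ((α x)^2 + ν^2)) := by
          rw [show (∫ w in (-L/ν)..(H/ν), ν / ((α (ν * w))^2 + ν^2))
              = ν⁻¹ • ∫ x in (ν * (-L/ν))..(ν * (H/ν)), ν / ((α x)^2 + ν^2) from
            intervalIntegral.integral_comp_mul_left (fun x => ν / ((α x)^2 + ν^2)) hν0]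
      _ = ∫ x in (-L)..H, ν / ((α x)^2 + ν^2) := by
          rw [smul_eq_mul, ← mul_assoc, mul_inv_cancel₀ hν0, one_mul,
            mul_div_cancel₀ _ hν0, mul_div_cancel₀ _ hν0]
  rw [ha_def] at hval
  rw [← hval]
  exact Filter.Tendsto.congr' heq key
end

section
/- Define v(x) = x e^{−x/2} for x ∈ ℝ, and for x > 0 define w(x) = −e^{x/2} + x e^{−x/2} ∫_1^x (e^t / t) dt. Then: (i) v''(x) + (−1/4 + 1/x) v(x) = 0 for all x ≠ 0; (ii) w''(x) + (−1/4 + 1/x) w(x) = 0 for all x > 0; (iii) the Wronskian is normalized: v(x) w'(x) − v'(x) w(x) = 1 for all x > 0; (iv) w is bounded near the origin with lim_{x→0⁺} w(x) = −1, even though v(0) = 0; hence the second fundamental solution of the Whittaker-type equation E'' + (−1/4 + 1/x)E = 0 does not vanish at the singular point x = 0. -/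
open Real intervalIntegral Filter Set

noncomputable def IB (x : ℝ) : ℝ := ∫ t in (1:ℝ)..x, Real.exp t / t

lemma IB_integrable {x : ℝ} (hx : 0 < x) :
    IntervalIntegrable (fun t => Real.exp t / t) MeasureTheory.volume 1 x := by
  apply ContinuousOn.intervalIntegrable
  intro t ht
  have ht0 : t ≠ 0 := by
    have := ht.1
    have hmin : (0:ℝ) < min 1 x := lt_min one_pos hx
    simp only [Set.uIcc, Set.mem_Icc] at ht
    nlinarith [ht.1]
  exact (Real.continuous_exp.continuousAt.div continuousAt_id ht0).continuousWithinAt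

lemma hasDerivAt_IB {x : ℝ} (hx : 0 < x) :
    HasDerivAt IB (Real.exp x / x) x := by
  apply intervalIntegral.integral_hasDerivAt_right (IB_integrable hx)
  · exact ⟨Set.univ, Filter.univ_mem,
      ((Real.measurable_exp.div measurable_id).aestronglyMeasurable)⟩
  · exact Real.continuous_exp.continuousAt.div continuousAt_id hx.ne'


/-- The regular solution `v(x) = x e^{−x/2}` of the Whittaker-type equation. -/
noncomputable def vBudden (x : ℝ) : ℝ := x * Real.exp (-x / 2)

/-- The second fundamental solution
`w(x) = −e^{x/2} + x e^{−x/2} ∫_1^x e^t/t dt` of the Whittaker-type equation. -/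
noncomputable def wBudden (x : ℝ) : ℝ :=
  -Real.exp (x / 2) + x * Real.exp (-x / 2) * ∫ t in (1:ℝ)..x, Real.exp t / t


lemma hasDerivAt_emx (x : ℝ) :
    HasDerivAt (fun y : ℝ => Real.exp (-y / 2)) (-Real.exp (-x / 2) / 2) x := by
  have h : HasDerivAt (fun y : ℝ => -y / 2) (-1/2 : ℝ) x := by
    simpa using ((hasDerivAt_id x).neg.div_const 2)
  simpa [div_eq_mul_inv, mul_comm, Function.comp_def] using (Real.hasDerivAt_exp (-x/2)).comp x h

lemma hasDerivAt_epx (x : ℝ) :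
    HasDerivAt (fun y : ℝ => Real.exp (y / 2)) (Real.exp (x / 2) / 2) x := by
  have h : HasDerivAt (fun y : ℝ => y / 2) (1/2 : ℝ) x := by
    simpa using ((hasDerivAt_id x).div_const 2)
  simpa [div_eq_mul_inv, mul_comm, Function.comp_def] using (Real.hasDerivAt_exp (x/2)).comp x h

lemma hasDerivAt_v (x : ℝ) :
    HasDerivAt vBudden ((1 - x/2) * Real.exp (-x / 2)) x := by
  have := (hasDerivAt_id x).mul (hasDerivAt_emx x)
  refine this.congr_deriv ?_
  simp [id]; ring

lemma hasDerivAt_v' (x : ℝ) :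
    HasDerivAt (fun y => (1 - y/2) * Real.exp (-y / 2)) ((x/4 - 1) * Real.exp (-x / 2)) x := by
  have h1 : HasDerivAt (fun y : ℝ => 1 - y/2) (-1/2 : ℝ) x := by
    have := (hasDerivAt_const x (1:ℝ)).sub ((hasDerivAt_id x).div_const 2)
    refine this.congr_deriv ?_
    norm_num
  have := h1.mul (hasDerivAt_emx x)
  refine this.congr_deriv ?_
  ring

lemma deriv_v : deriv vBudden = fun x => (1 - x/2) * Real.exp (-x / 2) :=
  funext fun x => (hasDerivAt_v x).deriv

lemma deriv_v_pt (x : ℝ) : deriv vBudden x = (1 - x/2) * Real.exp (-x / 2) :=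
  (hasDerivAt_v x).deriv

noncomputable def W1 (x : ℝ) : ℝ :=
  Real.exp (x / 2) / 2 + (1 - x/2) * Real.exp (-x / 2) * IB x

lemma hasDerivAt_w {x : ℝ} (hx : 0 < x) : HasDerivAt wBudden (W1 x) x := by
  have hw : wBudden = fun y => -Real.exp (y / 2) + (y * Real.exp (-y / 2)) * IB y := rfl
  rw [hw]
  have h1 := ((hasDerivAt_epx x).neg).add
    (((hasDerivAt_id x).mul (hasDerivAt_emx x)).mul (hasDerivAt_IB hx))
  refine h1.congr_deriv ?_
  have hkey : Real.exp (-x/2) * Real.exp x = Real.exp (x/2) := by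
    rw [← Real.exp_add]; ring_nf
  simp only [W1, id, Pi.mul_apply]
  rw [← hkey]
  field_simp [W1, vBudden, hx.ne']
  ring

lemma hasDerivAt_W1 {x : ℝ} (hx : 0 < x) :
    HasDerivAt W1 (Real.exp (x/2)/4 + (x/4 - 1) * Real.exp (-x / 2) * IB x
      + (1 - x/2) * Real.exp (-x / 2) * (Real.exp x / x)) x := by
  have h := ((hasDerivAt_epx x).div_const 2).add
    ((hasDerivAt_v' x).mul (hasDerivAt_IB hx))
  refine h.congr_deriv ?_
  ring

lemma deriv_w_eq {x : ℝ} (hx : 0 < x) : deriv wBudden x = W1 x := (hasDerivAt_w hx).deriv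

lemma deriv_deriv_w {x : ℝ} (hx : 0 < x) :
    deriv (deriv wBudden) x = Real.exp (x/2)/4 + (x/4 - 1) * Real.exp (-x / 2) * IB x
      + (1 - x/2) * Real.exp (-x / 2) * (Real.exp x / x) := by
  have hev : deriv wBudden =ᶠ[nhds x] W1 := by
    filter_upwards [IsOpen.mem_nhds isOpen_Ioi hx] with y hy
    exact deriv_w_eq hy
  rw [Filter.EventuallyEq.deriv_eq hev]
  exact (hasDerivAt_W1 hx).deriv

lemma w_ode {x : ℝ} (hx : 0 < x) :
    deriv (deriv wBudden) x + (-(1:ℝ)/4 + 1/x) * wBudden x = 0 := by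
  rw [deriv_deriv_w hx]
  have hw : wBudden x = -Real.exp (x / 2) + x * Real.exp (-x / 2) * IB x := rfl
  have hab : Real.exp (x / 2) * Real.exp (-x / 2) = 1 := by
    rw [← Real.exp_add, show x/2 + -x/2 = 0 by ring, Real.exp_zero]
  have hE : Real.exp x = Real.exp (x / 2) * Real.exp (x / 2) := by
    rw [← Real.exp_add]; congr 1; ring
  rw [hw, hE]
  set a := Real.exp (x / 2) with ha
  set b := Real.exp (-x / 2) with hb
  have ha0 : a ≠ 0 := Real.exp_ne_zero _
  have hb' : b = a⁻¹ := eq_inv_of_mul_eq_one_right hab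
  rw [hb']
  field_simp
  ring

lemma wronskian_vw {x : ℝ} (hx : 0 < x) :
    vBudden x * deriv wBudden x - deriv vBudden x * wBudden x = 1 := by
  rw [deriv_w_eq hx, deriv_v_pt]
  have hw : wBudden x = -Real.exp (x / 2) + x * Real.exp (-x / 2) * IB x := rfl
  have hv : vBudden x = x * Real.exp (-x / 2) := rfl
  have hab : Real.exp (x / 2) * Real.exp (-x / 2) = 1 := by
    rw [← Real.exp_add, show x/2 + -x/2 = 0 by ring, Real.exp_zero]
  rw [hw, hv, W1]
  set a := Real.exp (x / 2) with ha
  set b := Real.exp (-x / 2) with hb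
  have ha0 : a ≠ 0 := Real.exp_ne_zero _
  have hb' : b = a⁻¹ := eq_inv_of_mul_eq_one_right hab
  rw [hb']
  field_simp
  ring

lemma v_ode {x : ℝ} (hx : x ≠ 0) :
    deriv (deriv vBudden) x + (-(1:ℝ)/4 + 1/x) * vBudden x = 0 := by
  have h2 : deriv (deriv vBudden) x = (x/4 - 1) * Real.exp (-x / 2) := by
    rw [deriv_v]; exact (hasDerivAt_v' x).deriv
  rw [h2]
  have hv : vBudden x = x * Real.exp (-x / 2) := rfl
  rw [hv]
  field_simp
  ring

lemma IB_abs_bound {x : ℝ} (hx : 0 < x) (hx1 : x ≤ 1) :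
    |IB x| ≤ Real.exp 1 * (2 / Real.sqrt x) := by
  have hsx : 0 < Real.sqrt x := Real.sqrt_pos.mpr hx
  have hsym : IB x = -∫ t in x..(1:ℝ), Real.exp t / t := by
    rw [IB, intervalIntegral.integral_symm]
  have hint1 : IntervalIntegrable (fun t => Real.exp t / t) MeasureTheory.volume x 1 :=
    (IB_integrable hx).symm
  have hint2 : IntervalIntegrable (fun t => Real.exp 1 * (1 / t)) MeasureTheory.volume x 1 := by
    apply ContinuousOn.intervalIntegrable
    intro t ht
    simp only [Set.uIcc, Set.mem_Icc] at ht
    have ht0 : t ≠ 0 := by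
      have : (0:ℝ) < min x 1 := lt_min hx one_pos
      nlinarith [ht.1]
    exact (continuousAt_const.mul (continuousAt_const.div continuousAt_id ht0)).continuousWithinAt
  have hJnn : 0 ≤ ∫ t in x..(1:ℝ), Real.exp t / t := by
    apply intervalIntegral.integral_nonneg hx1
    intro t ht
    have : 0 < t := lt_of_lt_of_le hx ht.1
    positivity
  have hJle : (∫ t in x..(1:ℝ), Real.exp t / t) ≤ ∫ t in x..(1:ℝ), Real.exp 1 * (1 / t) := by
    apply intervalIntegral.integral_mono_on hx1 hint1 hint2
    intro t ht
    have ht0 : 0 < t := lt_of_lt_of_le hx ht.1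
    rw [div_eq_mul_inv, mul_one_div, div_eq_mul_inv]
    have : Real.exp t ≤ Real.exp 1 := Real.exp_le_exp.mpr ht.2
    exact mul_le_mul_of_nonneg_right this (by positivity)
  have hlog : (∫ t in x..(1:ℝ), Real.exp 1 * (1 / t)) = Real.exp 1 * Real.log (1/x) := by
    have h0 : (0:ℝ) ∉ Set.uIcc x 1 := Set.notMem_uIcc_of_lt hx one_pos
    rw [intervalIntegral.integral_const_mul, integral_one_div h0]
  have hlogle : Real.log (1/x) ≤ 2 / Real.sqrt x := by
    have h1 : (1/x : ℝ) = (1 / Real.sqrt x) ^ 2 := by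
      rw [div_pow, one_pow, Real.sq_sqrt hx.le]
    rw [h1, Real.log_pow]
    have := Real.log_le_sub_one_of_pos (show (0:ℝ) < 1 / Real.sqrt x by positivity)
    push_cast
    have h2 : 1 / Real.sqrt x - 1 ≤ 1 / Real.sqrt x := by linarith
    calc 2 * Real.log (1 / Real.sqrt x) ≤ 2 * (1 / Real.sqrt x - 1) := by linarith
      _ ≤ 2 / Real.sqrt x := by rw [mul_sub, mul_one_div]; linarith
  rw [hsym, abs_neg, abs_of_nonneg hJnn]
  calc (∫ t in x..(1:ℝ), Real.exp t / t) ≤ Real.exp 1 * Real.log (1/x) := by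
        rw [← hlog]; exact hJle
    _ ≤ Real.exp 1 * (2 / Real.sqrt x) :=
        mul_le_mul_of_nonneg_left hlogle (Real.exp_pos 1).le

lemma g_bound {x : ℝ} (hx : 0 < x) (hx1 : x ≤ 1) :
    |x * Real.exp (-x / 2) * IB x| ≤ 2 * Real.exp 1 * Real.sqrt x := by
  have hsx : 0 < Real.sqrt x := Real.sqrt_pos.mpr hx
  have he1 : Real.exp (-x / 2) ≤ 1 := Real.exp_le_one_iff.mpr (by linarith)
  have := IB_abs_bound hx hx1
  rw [abs_mul, abs_mul, abs_of_pos hx, abs_of_pos (Real.exp_pos _)]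
  calc x * Real.exp (-x / 2) * |IB x| ≤ x * 1 * (Real.exp 1 * (2 / Real.sqrt x)) := by
        apply mul_le_mul
        · exact mul_le_mul_of_nonneg_left he1 hx.le
        · exact this
        · exact abs_nonneg _
        · positivity
    _ = 2 * Real.exp 1 * (x / Real.sqrt x) := by ring
    _ = 2 * Real.exp 1 * Real.sqrt x := by rw [Real.div_sqrt]

lemma w_tendsto :
    Filter.Tendsto wBudden (nhdsWithin 0 (Set.Ioi 0)) (nhds (-1)) := by
  have hw : wBudden = fun x => -Real.exp (x / 2) + x * Real.exp (-x / 2) * IB x := rfl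
  rw [hw]
  have T1 : Filter.Tendsto (fun x : ℝ => -Real.exp (x / 2))
      (nhdsWithin 0 (Set.Ioi 0)) (nhds (-1)) := by
    have : Continuous fun x : ℝ => -Real.exp (x / 2) :=
      (Real.continuous_exp.comp (continuous_id.div_const 2)).neg
    have := this.tendsto' 0 (-1) (by simp)
    exact this.mono_left nhdsWithin_le_nhds
  have T2 : Filter.Tendsto (fun x : ℝ => x * Real.exp (-x / 2) * IB x)
      (nhdsWithin 0 (Set.Ioi 0)) (nhds 0) := by
    have hb : ∀ᶠ x in nhdsWithin (0:ℝ) (Set.Ioi 0),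
        ‖x * Real.exp (-x / 2) * IB x‖ ≤ 2 * Real.exp 1 * Real.sqrt x := by
      filter_upwards [Ioc_mem_nhdsGT_of_mem (Set.left_mem_Ico.mpr one_pos)] with x hx
      exact g_bound hx.1 hx.2
    have ht : Filter.Tendsto (fun x : ℝ => 2 * Real.exp 1 * Real.sqrt x)
        (nhdsWithin 0 (Set.Ioi 0)) (nhds 0) := by
      have hc : Continuous fun x : ℝ => 2 * Real.exp 1 * Real.sqrt x :=
        continuous_const.mul Real.continuous_sqrt
      exact (hc.tendsto' 0 0 (by simp)).mono_left nhdsWithin_le_nhds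
    exact squeeze_zero_norm' hb ht
  simpa using T1.add T2

lemma w_bounded : ∀ x ∈ Set.Ioc (0:ℝ) 1, |wBudden x| ≤ Real.exp (1/2) + 2 * Real.exp 1 := by
  intro x hx
  have hw : wBudden x = -Real.exp (x / 2) + x * Real.exp (-x / 2) * IB x := rfl
  rw [hw]
  have h1 : |(-Real.exp (x / 2))| ≤ Real.exp (1/2) := by
    rw [abs_neg, abs_of_pos (Real.exp_pos _)]
    exact Real.exp_le_exp.mpr (by linarith [hx.2])
  have h2 := g_bound hx.1 hx.2
  have h3 : Real.sqrt x ≤ 1 := by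
    rw [show (1:ℝ) = Real.sqrt 1 by simp]
    exact Real.sqrt_le_sqrt hx.2
  calc |(-Real.exp (x / 2)) + x * Real.exp (-x / 2) * IB x|
      ≤ |(-Real.exp (x / 2))| + |x * Real.exp (-x / 2) * IB x| := abs_add_le _ _
    _ ≤ Real.exp (1/2) + 2 * Real.exp 1 * Real.sqrt x := add_le_add h1 h2
    _ ≤ Real.exp (1/2) + 2 * Real.exp 1 := by nlinarith [Real.exp_pos 1]

/-- The exactly solvable Budden problem: `v` and `w` solve the Whittaker-type
equation `E'' + (−1/4 + 1/x)E = 0`, their Wronskian is normalized to `1`, and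
`w` is bounded near the origin with `w(0⁺) = −1 ≠ 0`, while `v(0) = 0`. -/
theorem budden_whittaker_solutions :
    (∀ x : ℝ, x ≠ 0 →
      deriv (deriv vBudden) x + (-(1:ℝ)/4 + 1/x) * vBudden x = 0)
    ∧ (∀ x : ℝ, 0 < x →
      deriv (deriv wBudden) x + (-(1:ℝ)/4 + 1/x) * wBudden x = 0)
    ∧ (∀ x : ℝ, 0 < x →
      vBudden x * deriv wBudden x - deriv vBudden x * wBudden x = 1)
    ∧ (∃ M : ℝ, ∀ x ∈ Set.Ioc (0:ℝ) 1, |wBudden x| ≤ M)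
    ∧ Filter.Tendsto wBudden (nhdsWithin 0 (Set.Ioi 0)) (nhds (-1))
    ∧ vBudden 0 = 0 := by
  refine ⟨fun x hx => v_ode hx, fun x hx => w_ode hx, fun x hx => wronskian_vw hx,
    ⟨Real.exp (1/2) + 2 * Real.exp 1, w_bounded⟩, w_tendsto, by simp [vBudden]⟩
end
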